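/- Let (X, f, ε) be an exterior discrete semi-flow, suppose X is Lagrange stable at every point of PA(L̄(X)), and suppose WA(L̄(X) \ L(X)) = ∅. Then A(L̄(X)) = D̄(X). -/

import Mathlib

open Set Topology

/-- The omega-limit set of a point `x` under the discrete semi-flow generated by `f`:
`Λ(x) = ⋂ₙ closure {f^[m] x : m ≥ n}`. -/
def Lambda {X : Type*} [TopologicalSpace X] (f : X → X) (x : X) : Set X :=
  ⋂ n : ℕ, closure ((fun m => f^[m] x) '' Set.Ici n)

/-- The omega-limit set of a subset `S`: `Λ(S) = ⋃_{x ∈ S} Λ(x)`. -/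
def LambdaSet {X : Type*} [TopologicalSpace X] (f : X → X) (S : Set X) : Set X :=
  ⋃ x ∈ S, Lambda f x

/-- The region of pseudo-attraction of `S`: `PA(S) = {x : Λ(x) ⊆ S}`. -/
def PA {X : Type*} [TopologicalSpace X] (f : X → X) (S : Set X) : Set X :=
  {x | Lambda f x ⊆ S}

/-- The region of weak-attraction of `S`: `WA(S) = {x : Λ(x) ∩ S ≠ ∅}`. -/
def WA {X : Type*} [TopologicalSpace X] (f : X → X) (S : Set X) : Set X :=
  {x | (Lambda f x ∩ S).Nonempty}

/-- The region of attraction of `S`: `A(S) = {x : ∅ ≠ Λ(x) ⊆ S}`. -/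
def RA {X : Type*} [TopologicalSpace X] (f : X → X) (S : Set X) : Set X :=
  {x | (Lambda f x).Nonempty ∧ Lambda f x ⊆ S}

/-- `X` is (positively) Lagrange stable at `x` if the closure of the trajectory of `x`
is compact. -/
def LagrangeStableAt {X : Type*} [TopologicalSpace X] (f : X → X) (x : X) : Prop :=
  IsCompact (closure (Set.range fun n : ℕ => f^[n] x))

/-- An externology on a topological space: a nonempty family of open sets closed under
finite intersections such that any open set containing a member belongs to the family. -/
def IsExternology {X : Type*} [TopologicalSpace X] (ε : Set (Set X)) : Prop :=
  ε.Nonempty ∧ (∀ E ∈ ε, IsOpen E) ∧ (∀ E ∈ ε, ∀ F ∈ ε, E ∩ F ∈ ε) ∧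
    (∀ E ∈ ε, ∀ U : Set X, IsOpen U → E ⊆ U → U ∈ ε)

/-- The limit space of an externology: `L(X) = ⋂_{E ∈ ε} E`. -/
def limitSpace {X : Type*} (ε : Set (Set X)) : Set X := ⋂ E ∈ ε, E

/-- The bar-limit space of an externology: `L̄(X) = ⋂_{E ∈ ε} closure E`. -/
def barLimit {X : Type*} [TopologicalSpace X] (ε : Set (Set X)) : Set X :=
  ⋂ E ∈ ε, closure E

/-- The region of pseudo-attraction of the externology:
`D(X) = {x : ∀ E ∈ ε, f^[m] x ∈ E for all large m}`. -/
def Dregion {X : Type*} (f : X → X) (ε : Set (Set X)) : Set X :=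
  {x | ∀ E ∈ ε, ∃ n : ℕ, ∀ m ≥ n, f^[m] x ∈ E}

/-- The region of pseudo-bar-attraction of the externology:
`D̄(X) = {x : ∀ E ∈ ε, f^[m] x ∈ closure E for all large m}`. -/
def Dbar {X : Type*} [TopologicalSpace X] (f : X → X) (ε : Set (Set X)) : Set X :=
  {x | ∀ E ∈ ε, ∃ n : ℕ, ∀ m ≥ n, f^[m] x ∈ closure E}

/-- A right-absorbing open subset: an open set that eventually contains the trajectory
of every point. -/
def RightAbsorbing {X : Type*} [TopologicalSpace X] (f : X → X) (E : Set X) : Prop :=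
  IsOpen E ∧ ∀ y : X, ∃ n : ℕ, ∀ m ≥ n, f^[m] y ∈ E

/-- A point `x` is periodic if `f^[n] x = x` for some `n ≥ 1`. -/
def IsPeriodicPoint {X : Type*} (f : X → X) (x : X) : Prop := ∃ n ≥ 1, f^[n] x = x

theorem stmt12 {X : Type*} [TopologicalSpace X] (f : X → X) (hf : Continuous f)
    (ε : Set (Set X)) (hε : IsExternology ε) (hflow : ∀ E ∈ ε, f ⁻¹' E ∈ ε)
    (hL : ∀ x ∈ PA f (barLimit ε), LagrangeStableAt f x)
    (hWA : WA f (barLimit ε \ limitSpace ε) = ∅) :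
    RA f (barLimit ε) = Dbar f ε := by
  have hopen := hε.2.1
  ext x
  set T : ℕ → Set X := fun n => (fun m => f^[m] x) '' Set.Ici n with hT
  have hTdec : ∀ n, T (n + 1) ⊆ T n := fun n =>
    Set.image_mono (Set.Ici_subset_Ici.mpr (Nat.le_succ n))
  have hTne : ∀ n, (T n).Nonempty := fun n => ⟨f^[n] x, n, le_refl n, rfl⟩
  have hTrange : ∀ n, T n ⊆ Set.range fun m => f^[m] x := fun n =>
    Set.image_subset_range _ _
  constructor
  · rintro ⟨hne, hsub⟩
    have hstab : LagrangeStableAt f x := hL x hsub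
    have hxWA : x ∉ WA f (barLimit ε \ limitSpace ε) := by
      simp [hWA]
    have hΛL : Lambda f x ⊆ limitSpace ε := by
      intro y hy
      by_contra hyL
      exact hxWA ⟨y, hy, hsub hy, hyL⟩
    intro E hE
    have hEopen : IsOpen E := hopen E hE
    have hΛE : Lambda f x ⊆ E := fun y hy =>
      Set.mem_iInter₂.mp (hΛL hy) E hE
    -- compactness argument
    set C : ℕ → Set X := fun n => closure (T n) ∩ Eᶜ with hC
    have hCcl : ∀ n, IsClosed (C n) := fun n =>
      (isClosed_closure).inter hEopen.isClosed_compl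
    have hC0 : IsCompact (C 0) :=
      hstab.of_isClosed_subset (hCcl 0)
        ((Set.inter_subset_left).trans (closure_mono (hTrange 0)))
    have : ∃ n, C n = ∅ := by
      by_contra h
      push_neg at h
      have hne' : ∀ n, (C n).Nonempty := h
      have hdec : ∀ n, C (n + 1) ⊆ C n := fun n =>
        Set.inter_subset_inter_left _ (closure_mono (hTdec n))
      obtain ⟨y, hy⟩ := IsCompact.nonempty_iInter_of_sequence_nonempty_isCompact_isClosed
        C hdec hne' hC0 hCcl
      have hyΛ : y ∈ Lambda f x := by
        simp only [Lambda, Set.mem_iInter]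
        intro n
        exact ((Set.mem_iInter.mp hy n)).1
      exact ((Set.mem_iInter.mp hy 0)).2 (hΛE hyΛ)
    obtain ⟨n, hn⟩ := this
    refine ⟨n, fun m hm => ?_⟩
    have hmem : f^[m] x ∈ closure (T n) := subset_closure ⟨m, hm, rfl⟩
    have : f^[m] x ∈ E := by
      by_contra hc
      have hmm : f^[m] x ∈ C n := ⟨hmem, hc⟩
      rw [hn] at hmm
      exact hmm
    exact subset_closure this
  · intro hD
    have hΛbar : Lambda f x ⊆ barLimit ε := by
      intro y hy
      simp only [barLimit, Set.mem_iInter]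
      intro E hE
      obtain ⟨n, hn⟩ := hD E hE
      have hsub : T n ⊆ closure E := by
        rintro _ ⟨m, hm, rfl⟩
        exact hn m hm
      have := closure_mono hsub
      rw [closure_closure] at this
      exact this (Set.mem_iInter.mp hy n)
    have hstab : LagrangeStableAt f x := hL x hΛbar
    refine ⟨?_, hΛbar⟩
    have hC0 : IsCompact (closure (T 0)) :=
      hstab.of_isClosed_subset isClosed_closure (closure_mono (hTrange 0))
    exact IsCompact.nonempty_iInter_of_sequence_nonempty_isCompact_isClosed
      (fun n => closure (T n)) (fun n => closure_mono (hTdec n))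
      (fun n => (hTne n).closure) hC0 (fun n => isClosed_closure)
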